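/- Let n, η be positive integers and let a_1, …, a_n, t ∈ ℤ satisfy |a_i| ≤ 2^η for every i and |t| ≤ 2^η, and suppose that for every z ∈ {0,1}^n one has Σ_{i=1}^n z_i a_i ≠ t. Let P be the set of primes lying in the interval [2^{10n+2⌈log₂ η⌉+10}, 2^{20n+2⌈log₂ η⌉+10}], and assume |P| ≥ η · 2^{20n}. Then the set B = {q ∈ P : there exists z ∈ {0,1}^n with Σ_{i=1}^n z_i a_i ≡ t (mod q)} satisfies 2^{18n} · |B| ≤ |P|; that is, a uniformly random prime from P is 'bad' with probability at most 2^{−18n}. -/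

import Mathlib

/-- For a NO instance of Subset-Sum with `|a_i|, |t| ≤ 2^η`, letting `P` be the set
of primes in `[2^{10n+2⌈log₂ η⌉+10}, 2^{20n+2⌈log₂ η⌉+10}]` and assuming `|P| ≥ η · 2^{20n}`,
the set `B ⊆ P` of "bad" primes (those for which some `0/1`-combination of the `a_i` becomes
congruent to `t`) satisfies `2^{18n} · |B| ≤ |P|`. -/
theorem stmt_2 (n η : ℕ) (hn : 0 < n) (hη : 0 < η)
    (a : Fin n → ℤ) (t : ℤ)
    (ha : ∀ i, |a i| ≤ 2 ^ η) (ht : |t| ≤ 2 ^ η)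
    (hno : ∀ z : Fin n → ℤ, (∀ i, z i = 0 ∨ z i = 1) → ∑ i, z i * a i ≠ t)
    (P : Set ℕ)
    (hP : P = {q : ℕ | q.Prime ∧
      q ∈ Set.Icc (2 ^ (10 * n + 2 * Nat.clog 2 η + 10)) (2 ^ (20 * n + 2 * Nat.clog 2 η + 10))})
    (hPcard : η * 2 ^ (20 * n) ≤ P.ncard) :
    2 ^ (18 * n) * {q ∈ P | ∃ z : Fin n → ℤ, (∀ i, z i = 0 ∨ z i = 1) ∧
        (q : ℤ) ∣ (∑ i, z i * a i) - t}.ncard ≤ P.ncard := by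
  classical
  set L := 10 * n + 2 * Nat.clog 2 η + 10 with hL
  set U := 20 * n + 2 * Nat.clog 2 η + 10 with hU
  set Pfin : Finset ℕ := (Finset.Icc (2 ^ L) (2 ^ U)).filter Nat.Prime with hPfin
  have hPeq : P = ↑Pfin := by
    rw [hP]; ext q
    simp [hPfin, Finset.mem_filter, Finset.mem_Icc, and_comm]
  set D : Finset (Fin n) → ℤ := fun s => (∑ i ∈ s, a i) - t with hD
  have hsum : ∀ s : Finset (Fin n),
      ∑ i, (if i ∈ s then (1:ℤ) else 0) * a i = ∑ i ∈ s, a i := by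
    intro s
    simp only [ite_mul, one_mul, zero_mul]
    rw [Finset.sum_ite_mem, Finset.univ_inter]
  have hDne : ∀ s, D s ≠ 0 := by
    intro s h
    apply hno (fun i => if i ∈ s then 1 else 0)
      (fun i => by by_cases hi : i ∈ s <;> simp [hi])
    rw [hsum s]
    have := sub_eq_zero.mp h
    linarith
  have hDle : ∀ s, (D s).natAbs ≤ 2 ^ (n + η) := by
    intro s
    have hcard : ((s.card : ℤ)) ≤ n := by
      exact_mod_cast s.card_le_univ.trans (by simp)
    have h1 : |D s| ≤ (n : ℤ) * 2 ^ η + 2 ^ η := by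
      calc |D s| ≤ |∑ i ∈ s, a i| + |t| := abs_sub _ _
        _ ≤ (∑ i ∈ s, |a i|) + 2 ^ η := by
            gcongr; exact Finset.abs_sum_le_sum_abs _ _
        _ ≤ (∑ _i ∈ s, (2:ℤ) ^ η) + 2 ^ η := by
            gcongr with i hi; exact ha i
        _ ≤ (n : ℤ) * 2 ^ η + 2 ^ η := by
            rw [Finset.sum_const, nsmul_eq_mul]
            have : (0:ℤ) ≤ 2 ^ η := by positivity
            nlinarith
    have hn2 : ((n : ℤ) + 1) ≤ 2 ^ n := by exact_mod_cast (Nat.lt_two_pow_self (n := n))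
    have h2 : (n : ℤ) * 2 ^ η + 2 ^ η ≤ 2 ^ (n + η) := by
      rw [pow_add]
      have : (0:ℤ) ≤ 2 ^ η := by positivity
      nlinarith
    have h3 : ((D s).natAbs : ℤ) ≤ (2:ℤ) ^ (n + η) := by
      rw [← Int.abs_eq_natAbs]; exact h1.trans h2
    exact_mod_cast h3
  set Bfin : Finset ℕ := Pfin.filter (fun q => ∃ s : Finset (Fin n), (q : ℤ) ∣ D s) with hBfin
  have hBeq : {q ∈ P | ∃ z : Fin n → ℤ, (∀ i, z i = 0 ∨ z i = 1) ∧
        (q : ℤ) ∣ (∑ i, z i * a i) - t} = ↑Bfin := by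
    ext q
    simp only [Set.mem_setOf_eq, Finset.mem_coe, hBfin, Finset.mem_filter]
    rw [hPeq, Finset.mem_coe]
    constructor
    · rintro ⟨hq, z, hz, hdvd⟩
      refine ⟨hq, Finset.univ.filter (fun i => z i = 1), ?_⟩
      have heq : ∑ i, z i * a i = ∑ i ∈ Finset.univ.filter (fun i => z i = 1), a i := by
        rw [Finset.sum_filter]
        apply Finset.sum_congr rfl
        intro i _
        rcases hz i with h | h <;> simp [h]
      rwa [heq] at hdvd
    · rintro ⟨hq, s, hdvd⟩
      exact ⟨hq, fun i => if i ∈ s then 1 else 0,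
        fun i => by by_cases hi : i ∈ s <;> simp [hi], by rwa [hsum s]⟩
  rw [hBeq, hPeq, Set.ncard_coe_finset, Set.ncard_coe_finset]
  rw [hPeq, Set.ncard_coe_finset] at hPcard
  have hper : ∀ s : Finset (Fin n), (Pfin.filter (fun q : ℕ => (q : ℤ) ∣ D s)).card ≤ n + η := by
    intro s
    set S := Pfin.filter (fun q : ℕ => (q : ℤ) ∣ D s) with hS
    have hsub : S ⊆ (D s).natAbs.primeFactors := by
      intro q hq
      rw [hS, Finset.mem_filter] at hq
      obtain ⟨hqP, hqd⟩ := hq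
      rw [hPfin, Finset.mem_filter] at hqP
      have hdvd : q ∣ (D s).natAbs := by
        have := Int.natAbs_dvd_natAbs.mpr hqd
        simpa using this
      exact Nat.mem_primeFactors.mpr ⟨hqP.2, hdvd, Int.natAbs_ne_zero.mpr (hDne s)⟩
    have hprod : ∏ q ∈ S, q ∣ (D s).natAbs :=
      (Finset.prod_dvd_prod_of_subset S _ id hsub).trans (Nat.prod_primeFactors_dvd _)
    have hpos : 0 < (D s).natAbs := Int.natAbs_pos.mpr (hDne s)
    have h2 : 2 ^ S.card ≤ ∏ q ∈ S, q := by
      apply Finset.pow_card_le_prod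
      intro q hq
      rw [hS, Finset.mem_filter, hPfin, Finset.mem_filter] at hq
      exact hq.1.2.two_le
    have h3 : (2:ℕ) ^ S.card ≤ 2 ^ (n + η) :=
      h2.trans ((Nat.le_of_dvd hpos hprod).trans (hDle s))
    exact (Nat.pow_le_pow_iff_right (by norm_num)).mp h3
  have hBcard : Bfin.card ≤ 2 ^ n * (n + η) := by
    have hsub : Bfin ⊆ (Finset.univ : Finset (Finset (Fin n))).biUnion
        (fun s => Pfin.filter (fun q : ℕ => (q : ℤ) ∣ D s)) := by
      intro q hq
      rw [hBfin, Finset.mem_filter] at hq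
      obtain ⟨hqP, s, hdvd⟩ := hq
      rw [Finset.mem_biUnion]
      exact ⟨s, Finset.mem_univ s, Finset.mem_filter.mpr ⟨hqP, hdvd⟩⟩
    calc Bfin.card ≤ _ := Finset.card_le_card hsub
      _ ≤ ∑ s : Finset (Fin n), (Pfin.filter (fun q : ℕ => (q : ℤ) ∣ D s)).card :=
          Finset.card_biUnion_le
      _ ≤ ∑ _s : Finset (Fin n), (n + η) := Finset.sum_le_sum (fun s _ => hper s)
      _ = 2 ^ n * (n + η) := by simp [Finset.card_univ, mul_comm]
  have hkey : n + η ≤ η * 2 ^ n := by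
    have h1 : n + 1 ≤ 2 ^ n := Nat.lt_two_pow_self (n := n)
    calc n + η ≤ η * n + η := by nlinarith
      _ = η * (n + 1) := by ring
      _ ≤ η * 2 ^ n := Nat.mul_le_mul_left η h1
  calc 2 ^ (18 * n) * Bfin.card ≤ 2 ^ (18 * n) * (2 ^ n * (n + η)) := by gcongr
    _ ≤ 2 ^ (18 * n) * (2 ^ n * (η * 2 ^ n)) := by gcongr
    _ = η * 2 ^ (20 * n) := by
        rw [show 20 * n = 18 * n + n + n by ring, pow_add, pow_add]; ring
    _ ≤ Pfin.card := hPcard
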